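/- Let q be a prime power and k a positive integer coprime to q, and write subord_k(q) = ∏_{r | k prime} r^{α(r)}. Define τ_k := ∏_{r | k prime} r^{⌊α(r)/2⌋}. Then τ_k divides k / rad(k) and τ_k^2 divides ord_k(q), and ord_{k/τ_k}(q^{τ_k}) = ord_k(q) / τ_k^2. -/

import Mathlib

/-- The radical of a natural number: the product of its distinct prime divisors. -/
def natRadical (k : ℕ) : ℕ := ∏ r ∈ k.primeFactors, r

/-- The suborder `subord_k(q) = ord_k(q) / ord_{rad k}(q)`. -/
noncomputable def subord (q k : ℕ) : ℕ :=
  orderOf ((q : ZMod k)) / orderOf ((q : ZMod (natRadical k)))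

/-- The central index `τ_k = ∏_{r | k prime} r^{⌊α(r)/2⌋}`, where
`subord_k(q) = ∏ r^{α(r)}`. -/
noncomputable def centralIndex (q k : ℕ) : ℕ :=
  ∏ r ∈ k.primeFactors, r ^ ((subord q k).factorization r / 2)

section auxQlemmas
open Finset

lemma auxQ.pow_sub_one_dvd {q a b : ℕ} (h : a ∣ b) : q ^ a - 1 ∣ q ^ b - 1 := by
  obtain ⟨c, rfl⟩ := h
  calc q ^ a - 1 ∣ (q ^ a) ^ c - 1 ^ c := Nat.sub_dvd_pow_sub_pow _ 1 c
  _ = q ^ (a * c) - 1 := by rw [one_pow, pow_mul]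

lemma auxQ.ord_dvd_iff {q n : ℕ} (hq : 1 ≤ q) (x : ℕ) :
    orderOf ((q : ZMod n)) ∣ x ↔ n ∣ q ^ x - 1 := by
  rw [orderOf_dvd_iff_pow_eq_one, ← Nat.cast_pow,
    show (1 : ZMod n) = ((1 : ℕ) : ZMod n) by simp, ZMod.natCast_eq_natCast_iff]
  constructor
  · intro h
    exact (Nat.modEq_iff_dvd' (Nat.one_le_pow _ _ hq)).mp h.symm
  · intro h
    exact ((Nat.modEq_iff_dvd' (Nat.one_le_pow _ _ hq)).mpr h).symm

lemma auxQ.ord_pos {q n : ℕ} (hn : n ≠ 0) (h : Nat.Coprime q n) :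
    0 < orderOf ((q : ZMod n)) := by
  haveI : NeZero n := ⟨hn⟩
  have hu : ((ZMod.unitOfCoprime q h : (ZMod n)ˣ) : ZMod n) = q := ZMod.coe_unitOfCoprime q h
  rw [← hu, orderOf_units]
  exact orderOf_pos _

lemma auxQ.ord_dvd_ord {q a b : ℕ} (hq : 1 ≤ q) (hab : a ∣ b) :
    orderOf ((q : ZMod a)) ∣ orderOf ((q : ZMod b)) := by
  rw [auxQ.ord_dvd_iff hq]
  exact hab.trans ((auxQ.ord_dvd_iff hq _).mp dvd_rfl)

lemma auxQ.geom_nat {b : ℕ} (hb : 1 ≤ b) (n : ℕ) :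
    b ^ n - 1 = (b - 1) * ∑ i ∈ Finset.range n, b ^ i := by
  have h := geom_sum_mul (b : ℤ) n
  have h2 : ((b ^ n - 1 : ℕ) : ℤ) = (((b - 1) * ∑ i ∈ Finset.range n, b ^ i : ℕ) : ℤ) := by
    push_cast [Nat.cast_sub hb, Nat.cast_sub (Nat.one_le_pow n b hb)]
    linarith [h]
  exact_mod_cast h2

lemma auxQ.geom_sum_odd {b n : ℕ} (hb : b % 2 = 1) (hn : n % 2 = 1) :
    (∑ i ∈ Finset.range n, b ^ i) % 2 = 1 := by
  have hpow : ∀ i, b ^ i % 2 = 1 := fun i => by rw [Nat.pow_mod, hb, one_pow]; rfl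
  rw [Finset.sum_nat_mod]
  have h1 : (∑ i ∈ Finset.range n, b ^ i % 2) = n := by
    rw [Finset.sum_congr rfl fun i _ => hpow i, Finset.sum_const, Finset.card_range,
      smul_eq_mul, mul_one]
  rw [h1]; exact hn

-- p = 2, n odd: exact, no extra condition

lemma auxQ.lte_two_odd {b n : ℕ} (hb : 2 ≤ b) (hbodd : b % 2 = 1) (hn : n % 2 = 1) :
    (b ^ n - 1).factorization 2 = (b - 1).factorization 2 := by
  rw [auxQ.geom_nat (by omega) n]
  have hT : (∑ i ∈ Finset.range n, b ^ i) % 2 = 1 := auxQ.geom_sum_odd hbodd hn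
  rw [Nat.factorization_mul (by omega) (by omega), Finsupp.add_apply,
    Nat.factorization_eq_zero_of_not_dvd (by omega : ¬ 2 ∣ ∑ i ∈ Finset.range n, b ^ i), add_zero]

-- odd prime case

lemma auxQ.lte_odd {r b n : ℕ} (hr : r.Prime) (hr2 : r ≠ 2) (hb : 2 ≤ b) (hn : n ≠ 0)
    (hdvd : r ∣ b - 1) :
    (b ^ n - 1).factorization r = (b - 1).factorization r + n.factorization r := by
  haveI : Fact r.Prime := ⟨hr⟩
  have hnb : ¬ r ∣ b := by
    intro hrb
    have h1 : r ∣ b - (b - 1) := Nat.dvd_sub hrb hdvd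
    rw [Nat.sub_sub_self (by omega)] at h1
    exact hr.one_lt.ne' (Nat.eq_one_of_dvd_one h1 ▸ rfl)
  have h := padicValNat.pow_sub_pow (p := r) (hr.odd_of_ne_two hr2) (x := b) (y := 1)
    (by omega) (by simpa using hdvd) hnb hn
  simp only [one_pow] at h
  simp only [Nat.factorization_def _ hr]
  exact h

lemma auxQ.lte_two_even {b n : ℕ} (hb : 2 ≤ b) (hbodd : b % 2 = 1) (hn : n ≠ 0)
    (hne : n % 2 = 0) :
    (b ^ n - 1).factorization 2 + 1
      = (b + 1).factorization 2 + (b - 1).factorization 2 + n.factorization 2 := by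
  have h := padicValNat.pow_two_sub_pow (x := b) (y := 1) (by omega)
    (by simpa using (show (2:ℕ) ∣ b - 1 by omega)) (by omega) hn (Nat.even_iff.mpr hne)
  simp only [one_pow] at h
  simp only [Nat.factorization_def _ Nat.prime_two]
  exact h

lemma auxQ.fact_two_of_mod_four {a : ℕ} (h : a % 4 = 2) : a.factorization 2 = 1 := by
  have h2 : 2 ∣ a := by omega
  have h4 : ¬ 2 ^ 2 ∣ a := by omega
  have hlow : 1 ≤ a.factorization 2 :=
    Nat.Prime.factorization_pos_of_dvd Nat.prime_two (by omega) h2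
  have hhigh : ¬ 2 ≤ a.factorization 2 := fun hc =>
    h4 ((Nat.Prime.pow_dvd_iff_le_factorization Nat.prime_two (by omega)).mpr hc)
  omega

lemma auxQ.lte_low {r b n : ℕ} (hr : r.Prime) (hb : 2 ≤ b) (hn : n ≠ 0)
    (hdvd : r ∣ b - 1) :
    (b - 1).factorization r + n.factorization r ≤ (b ^ n - 1).factorization r := by
  by_cases hr2 : r = 2
  · subst hr2
    have hbodd : b % 2 = 1 := by omega
    by_cases hno : n % 2 = 1
    · rw [auxQ.lte_two_odd hb hbodd hno,
        Nat.factorization_eq_zero_of_not_dvd (by omega : ¬ 2 ∣ n), add_zero]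
    · have heq := auxQ.lte_two_even hb hbodd hn (by omega)
      have hpos : 1 ≤ (b + 1).factorization 2 :=
        Nat.Prime.factorization_pos_of_dvd Nat.prime_two (by omega) (by omega)
      omega
  · exact (auxQ.lte_odd hr hr2 hb hn hdvd).ge

lemma auxQ.lte_key {r b n : ℕ} (hr : r.Prime) (hb : 2 ≤ b) (hn : n ≠ 0)
    (hdvd : r ∣ b - 1) (h2 : r = 2 → n % 2 = 1 ∨ 4 ∣ b - 1) :
    (b ^ n - 1).factorization r = (b - 1).factorization r + n.factorization r := by
  by_cases hr2 : r = 2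
  · subst hr2
    have hbodd : b % 2 = 1 := by omega
    rcases h2 rfl with hno | h4
    · rw [auxQ.lte_two_odd hb hbodd hno,
        Nat.factorization_eq_zero_of_not_dvd (by omega : ¬ 2 ∣ n), add_zero]
    · by_cases hno : n % 2 = 1
      · rw [auxQ.lte_two_odd hb hbodd hno,
          Nat.factorization_eq_zero_of_not_dvd (by omega : ¬ 2 ∣ n), add_zero]
      · have heq := auxQ.lte_two_even hb hbodd hn (by omega)
        have h1 : (b + 1).factorization 2 = 1 := auxQ.fact_two_of_mod_four (by omega)
        omega
  · exact auxQ.lte_odd hr hr2 hb hn hdvd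

lemma auxQ.factorization_prod_pow {k : ℕ} (f : ℕ → ℕ) (r : ℕ) :
    (∏ p ∈ k.primeFactors, p ^ f p).factorization r
      = if r ∈ k.primeFactors then f r else 0 := by
  rw [Nat.factorization_prod
    (fun p hp => pow_ne_zero _ (Nat.pos_of_mem_primeFactors hp).ne')]
  rw [Finset.sum_apply']
  by_cases hr : r ∈ k.primeFactors
  · rw [if_pos hr, Finset.sum_eq_single r]
    · rw [(Nat.prime_of_mem_primeFactors hr).factorization_pow, Finsupp.single_eq_same]
    · intro p hp hne
      rw [(Nat.prime_of_mem_primeFactors hp).factorization_pow, Finsupp.single_eq_of_ne' hne]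
    · intro h; exact absurd hr h
  · rw [if_neg hr, Finset.sum_eq_zero]
    intro p hp
    rw [(Nat.prime_of_mem_primeFactors hp).factorization_pow,
      Finsupp.single_eq_of_ne' (by rintro rfl; exact hr hp)]

lemma auxQ.dvd_iff_forall_primeFactors {k A : ℕ} (hk : k ≠ 0) (hA : A ≠ 0) :
    k ∣ A ↔ ∀ r ∈ k.primeFactors, k.factorization r ≤ A.factorization r := by
  rw [← Nat.factorization_le_iff_dvd hk hA, Finsupp.le_def]
  constructor
  · exact fun h r _ => h r
  · intro h r
    by_cases hr : r ∈ k.primeFactors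
    · exact h r hr
    · have h0 : k.factorization r = 0 := by
        rwa [← Nat.support_factorization, Finsupp.notMem_support_iff] at hr
      omega

lemma auxQ.odd_sq_sub_one {a : ℕ} (h : a % 2 = 1) : 4 ∣ a ^ 2 - 1 := by
  obtain ⟨j, rfl⟩ : ∃ j, a = 2 * j + 1 := ⟨a / 2, by omega⟩
  have hid : (2 * j + 1) ^ 2 = 4 * (j * j + j) + 1 := by ring
  exact ⟨j * j + j, by omega⟩

end auxQlemmas

/-- Let `q` be a prime power and `k ≥ 1` coprime to `q`, and let `τ_k` be the
central index. Then `τ_k ∣ k / rad(k)`, `τ_k² ∣ ord_k(q)`, and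
`ord_{k/τ_k}(q^{τ_k}) = ord_k(q) / τ_k²`. -/
theorem stmt_7 (p s q k : ℕ) (hp : p.Prime) (hq : q = p ^ s) (hs : 1 ≤ s)
    (hk : 1 ≤ k) (hqk : Nat.Coprime q k) :
    centralIndex q k ∣ k / natRadical k ∧
    centralIndex q k ^ 2 ∣ orderOf ((q : ZMod k)) ∧
    orderOf (((q : ZMod (k / centralIndex q k))) ^ centralIndex q k)
      = orderOf ((q : ZMod k)) / centralIndex q k ^ 2 := by
  have hq2 : 2 ≤ q := by
    subst hq
    calc 2 ≤ p := hp.two_le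
    _ ≤ p ^ s := Nat.le_self_pow (by omega) p
  have hq1 : 1 ≤ q := by omega
  have hk0 : k ≠ 0 := by omega
  have hqpow_ne : ∀ {Y : ℕ}, Y ≠ 0 → q ^ Y - 1 ≠ 0 := by
    intro Y hY
    have := Nat.le_self_pow hY q
    omega
  have hqpow2 : ∀ {Y : ℕ}, Y ≠ 0 → 2 ≤ q ^ Y := by
    intro Y hY
    have := Nat.le_self_pow hY q
    omega
  have hRdvd : natRadical k ∣ k := Nat.prod_primeFactors_dvd k
  set R := natRadical k with hRdef
  have hR0 : R ≠ 0 := fun h => hk0 (Nat.eq_zero_of_zero_dvd (h ▸ hRdvd))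
  have hqR : Nat.Coprime q R := Nat.Coprime.coprime_dvd_right hRdvd hqk
  set N := orderOf ((q : ZMod k)) with hNdef
  set D := orderOf ((q : ZMod R)) with hDdef
  have hN0 : 0 < N := auxQ.ord_pos hk0 hqk
  have hD0 : 0 < D := auxQ.ord_pos hR0 hqR
  have hDN : D ∣ N := auxQ.ord_dvd_ord hq1 hRdvd
  set S := subord q k with hSdef
  have hSD : S * D = N := Nat.div_mul_cancel hDN
  have hS0 : S ≠ 0 := by
    intro h; rw [h, zero_mul] at hSD; omega
  set τ := centralIndex q k with hτdef
  have hτfact : ∀ r, τ.factorization r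
      = if r ∈ k.primeFactors then S.factorization r / 2 else 0 :=
    fun r => auxQ.factorization_prod_pow (fun r => (subord q k).factorization r / 2) r
  have hτ0 : τ ≠ 0 := by
    rw [hτdef]
    unfold centralIndex
    exact Finset.prod_ne_zero_iff.mpr
      (fun r hr => pow_ne_zero _ (Nat.pos_of_mem_primeFactors hr).ne')
  have hkQN : k ∣ q ^ N - 1 := (auxQ.ord_dvd_iff hq1 N).mp dvd_rfl
  have hRD : R ∣ q ^ D - 1 := (auxQ.ord_dvd_iff hq1 D).mp dvd_rfl
  have hRprod : R = ∏ p ∈ k.primeFactors, p ^ (fun _ => 1) p := by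
    rw [hRdef]; unfold natRadical; simp
  have hRfact : ∀ r ∈ k.primeFactors, R.factorization r = 1 := by
    intro r hr
    rw [hRprod, auxQ.factorization_prod_pow, if_pos hr]
  have hkfact_pos : ∀ r ∈ k.primeFactors, 1 ≤ k.factorization r := fun r hr =>
    Nat.Prime.factorization_pos_of_dvd (Nat.prime_of_mem_primeFactors hr) hk0
      (Nat.dvd_of_mem_primeFactors hr)
  have hkR0 : k / R ≠ 0 :=
    (Nat.div_pos (Nat.le_of_dvd (by omega) hRdvd) (Nat.pos_of_ne_zero hR0)).ne'
  have hkRfact : ∀ r ∈ k.primeFactors,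
      (k / R).factorization r = k.factorization r - 1 := by
    intro r hr
    rw [Nat.factorization_div hRdvd, Finsupp.tsub_apply, hRfact r hr]
  -- N ∣ D * (k / R), hence subord ∣ k / R
  have hNdvd : N ∣ D * (k / R) := by
    rw [hNdef, auxQ.ord_dvd_iff hq1,
      auxQ.dvd_iff_forall_primeFactors hk0 (hqpow_ne (by positivity))]
    intro r hr
    have hrp := Nat.prime_of_mem_primeFactors hr
    have hrR : r ∣ R := by rw [hRprod]; simpa using Finset.dvd_prod_of_mem _ hr
    have hrdvd : r ∣ q ^ D - 1 := hrR.trans hRD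
    have hlow := auxQ.lte_low hrp (hqpow2 hD0.ne') hkR0 hrdvd
    rw [← pow_mul] at hlow
    have h1 : 1 ≤ (q ^ D - 1).factorization r :=
      Nat.Prime.factorization_pos_of_dvd hrp (hqpow_ne hD0.ne') hrdvd
    have h2 := hkRfact r hr
    have h3 := hkfact_pos r hr
    omega
  have hSkR : S ∣ k / R := by
    have h : S * D ∣ (k / R) * D := by rw [hSD, mul_comm]; exact hNdvd
    exact (Nat.mul_dvd_mul_iff_right hD0).mp h
  have hSle : ∀ r, S.factorization r ≤ (k / R).factorization r :=
    Finsupp.le_def.mp ((Nat.factorization_le_iff_dvd hS0 hkR0).mpr hSkR)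
  -- Goal 1
  have hτkR : τ ∣ k / R := by
    rw [← Nat.factorization_le_iff_dvd hτ0 hkR0, Finsupp.le_def]
    intro r
    rw [hτfact r]
    by_cases hr : r ∈ k.primeFactors
    · rw [if_pos hr]; exact (Nat.div_le_self _ 2).trans (hSle r)
    · rw [if_neg hr]; exact Nat.zero_le _
  -- Goal 2
  have hτsqS : τ ^ 2 ∣ S := by
    rw [← Nat.factorization_le_iff_dvd (pow_ne_zero 2 hτ0) hS0, Finsupp.le_def]
    intro r
    rw [Nat.factorization_pow, Finsupp.smul_apply, smul_eq_mul, hτfact r]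
    by_cases hr : r ∈ k.primeFactors
    · rw [if_pos hr]; omega
    · rw [if_neg hr]; omega
  have hSN : S ∣ N := ⟨D, hSD.symm⟩
  have hτS : τ ∣ S := (dvd_pow_self τ two_ne_zero).trans hτsqS
  have hτN : τ ∣ N := hτS.trans hSN
  set X := N / τ with hXdef
  have hXτ : X * τ = N := Nat.div_mul_cancel hτN
  have hX0 : X ≠ 0 := by
    intro h; rw [h, zero_mul] at hXτ; omega
  have hDτN : D * τ ∣ N := by
    rw [← hSD, mul_comm D τ]
    exact mul_dvd_mul_right hτS D
  have hDX : D ∣ X := by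
    have h : D * τ ∣ X * τ := by rw [hXτ]; exact hDτN
    exact (Nat.mul_dvd_mul_iff_right (Nat.pos_of_ne_zero hτ0)).mp h
  have hτk : τ ∣ k := hτkR.trans (Nat.div_dvd_of_dvd hRdvd)
  set m := k / τ with hmdef
  have hm0 : m ≠ 0 :=
    (Nat.div_pos (Nat.le_of_dvd (by omega) hτk) (Nat.pos_of_ne_zero hτ0)).ne'
  have hmk : m ∣ k := Nat.div_dvd_of_dvd hτk
  have hqm : Nat.Coprime q m := Nat.Coprime.coprime_dvd_right hmk hqk
  have hmfact : ∀ r ∈ k.primeFactors,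
      m.factorization r = k.factorization r - τ.factorization r := by
    intro r hr
    rw [hmdef, Nat.factorization_div hτk, Finsupp.tsub_apply]
  have hβe : ∀ r ∈ k.primeFactors, τ.factorization r ≤ k.factorization r - 1 := by
    intro r hr
    have h := Finsupp.le_def.mp ((Nat.factorization_le_iff_dvd hτ0 hkR0).mpr hτkR) r
    rwa [hkRfact r hr] at h
  have hRm : R ∣ m := by
    rw [← Nat.factorization_le_iff_dvd hR0 hm0, Finsupp.le_def]
    intro r
    by_cases hr : r ∈ k.primeFactors
    · rw [hRfact r hr, hmfact r hr]
      have h1 := hβe r hr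
      have h2 := hkfact_pos r hr
      omega
    · have h0 : R.factorization r = 0 := by
        rw [hRprod, auxQ.factorization_prod_pow, if_neg hr]
      rw [h0]; exact Nat.zero_le _
  set M := orderOf ((q : ZMod m)) with hMdef
  have hM0 : 0 < M := auxQ.ord_pos hm0 hqm
  have hDM : D ∣ M := auxQ.ord_dvd_ord hq1 hRm
  have hmQM : m ∣ q ^ M - 1 := (auxQ.ord_dvd_iff hq1 M).mp dvd_rfl
  have hNfac : ∀ r, N.factorization r = S.factorization r + D.factorization r := by
    intro r
    rw [← hSD, Nat.factorization_mul hS0 hD0.ne', Finsupp.add_apply]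
  have hXfac : ∀ r, X.factorization r + τ.factorization r = N.factorization r := by
    intro r
    rw [← hXτ, Nat.factorization_mul hX0 hτ0, Finsupp.add_apply]
  have hRX : R ∣ q ^ X - 1 := hRD.trans (auxQ.pow_sub_one_dvd hDX)
  -- Direction B : M ∣ X
  have hB : M ∣ X := by
    rw [hMdef, auxQ.ord_dvd_iff hq1,
      auxQ.dvd_iff_forall_primeFactors hm0 (hqpow_ne hX0)]
    intro r hrm
    have hr : r ∈ k.primeFactors := Nat.primeFactors_mono hmk hk0 hrm
    have hrp := Nat.prime_of_mem_primeFactors hr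
    have hrR : r ∣ R := by rw [hRprod]; simpa using Finset.dvd_prod_of_mem _ hr
    have hrdvd : r ∣ q ^ X - 1 := hrR.trans hRX
    have hcond : r = 2 → τ % 2 = 1 ∨ 4 ∣ q ^ X - 1 := by
      intro h2e; subst h2e
      by_cases hβ2 : τ.factorization 2 = 0
      · left
        have hnd : ¬ 2 ∣ τ := fun hd =>
          absurd (Nat.Prime.factorization_pos_of_dvd Nat.prime_two hτ0 hd) (by omega)
        omega
      · right
        have hα : τ.factorization 2 = S.factorization 2 / 2 := by
          rw [hτfact 2, if_pos hr]
        have h1 := hXfac 2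
        have h2 := hNfac 2
        have hX2 : 1 ≤ X.factorization 2 := by omega
        have h2X : 2 ∣ X := by
          have h := (Nat.Prime.pow_dvd_iff_le_factorization Nat.prime_two hX0).mpr
            (by simpa using hX2)
          simpa using h
        have hqodd : q % 2 = 1 := by
          have h2k : 2 ∣ k := Nat.dvd_of_mem_primeFactors hr
          have hnq : ¬ 2 ∣ q := by
            intro hdq
            have h12 : (2:ℕ) ∣ Nat.gcd q k := Nat.dvd_gcd hdq h2k
            rw [Nat.Coprime] at hqk
            rw [hqk] at h12
            omega
          omega
        obtain ⟨t, ht⟩ := h2X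
        rw [ht, mul_comm 2 t, pow_mul]
        exact auxQ.odd_sq_sub_one (by rw [Nat.pow_mod, hqodd, one_pow]; rfl)
    have hkey := auxQ.lte_key hrp (hqpow2 hX0) hτ0 hrdvd hcond
    rw [← pow_mul, hXτ] at hkey
    have hNge : k.factorization r ≤ (q ^ N - 1).factorization r :=
      Finsupp.le_def.mp
        ((Nat.factorization_le_iff_dvd hk0 (hqpow_ne hN0.ne')).mpr hkQN) r
    rw [hmfact r hr]
    have h4 := hβe r hr
    have h5 := hkfact_pos r hr
    omega
  -- Direction A : N ∣ M * τ
  have hA : N ∣ M * τ := by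
    rw [hNdef, auxQ.ord_dvd_iff hq1,
      auxQ.dvd_iff_forall_primeFactors hk0 (hqpow_ne (by positivity))]
    intro r hr
    have hrp := Nat.prime_of_mem_primeFactors hr
    have hrR : r ∣ R := by rw [hRprod]; simpa using Finset.dvd_prod_of_mem _ hr
    have hrdvd : r ∣ q ^ M - 1 := hrR.trans (hRm.trans hmQM)
    have hlow := auxQ.lte_low hrp (hqpow2 hM0.ne') hτ0 hrdvd
    rw [← pow_mul] at hlow
    have hmge : m.factorization r ≤ (q ^ M - 1).factorization r :=
      Finsupp.le_def.mp
        ((Nat.factorization_le_iff_dvd hm0 (hqpow_ne hM0.ne')).mpr hmQM) r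
    rw [hmfact r hr] at hmge
    have h4 := hβe r hr
    have h5 := hkfact_pos r hr
    omega
  have hXdvdM : X ∣ M := by
    have h : X * τ ∣ M * τ := by rw [hXτ]; exact hA
    exact (Nat.mul_dvd_mul_iff_right (Nat.pos_of_ne_zero hτ0)).mp h
  have hMX : M = X := Nat.dvd_antisymm hB hXdvdM
  have hτX : τ ∣ X := by
    rw [← Nat.factorization_le_iff_dvd hτ0 hX0, Finsupp.le_def]
    intro r
    by_cases hr : r ∈ k.primeFactors
    · have h1 := hXfac r
      have h2 := hNfac r
      have hα : τ.factorization r = S.factorization r / 2 := by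
        rw [hτfact r, if_pos hr]
      omega
    · rw [hτfact r, if_neg hr]; exact Nat.zero_le _
  refine ⟨hτkR, hτsqS.trans hSN, ?_⟩
  rw [orderOf_pow' _ hτ0, ← hMdef, hMX, Nat.gcd_eq_right hτX, hXdef,
    Nat.div_div_eq_div_mul, ← pow_two]
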